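/- Let G be a finite connected simple graph with |E| ≥ |V|, where |V| and |E| are the numbers of vertices and unoriented edges, and set g = |E| − |V| + 1 ≥ 1 (the number of independent loops of G). Then the polynomial det(I − u·B) in the variable u, where B is the non-backtracking edge-adjacency matrix of G, is divisible by (1 − u)^g · (1 + u)^{g−1}. In particular, the inverse Ihara–Selberg L-function L⁻¹(u) = det(I − u·B) has a zero of order at least g at u = 1 and a zero of order at least g − 1 at u = −1. -/

import Mathlib

open Matrix Polynomial

variable {V : Type*}

/-- A dart `d'` follows a dart `d` without backtracking. -/
def FollowsNB {G : SimpleGraph V} (d' d : G.Dart) : Prop :=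
  d'.fst = d.snd ∧ d' ≠ d.symm

instance {G : SimpleGraph V} [DecidableEq V] (d' d : G.Dart) : Decidable (FollowsNB d' d) :=
  inferInstanceAs (Decidable (_ ∧ _))

/-- The non-backtracking edge-adjacency matrix with polynomial entries: the entry at
`(d', d)` is the variable `X` (standing for `u`) if `d'` follows `d` without
backtracking, and `0` otherwise; thus `det(1 − nbPolyMatrix G)` is the polynomial
`det(I − u·B)` in the variable `u`. -/
noncomputable def nbPolyMatrix (G : SimpleGraph V) [Fintype V] [DecidableEq V] [DecidableRel G.Adj] :
    Matrix G.Dart G.Dart (Polynomial ℤ) :=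
  fun d' d => if FollowsNB d' d then Polynomial.X else 0

/-! ### Linear algebra: geometric multiplicity gives factors of `det (1 - X • M)` -/

section Key
variable {F n : Type*} [Field F] [Fintype n] [DecidableEq n]

lemma pow_dvd_det_one_sub (M : Matrix n n F) (a : F) (k : ℕ) (v : Fin k → n → F)
    (hv : LinearIndependent F v) (hMv : ∀ i, M *ᵥ v i = a • v i) :
    (1 - C a * X) ^ k ∣ (1 - (X : F[X]) • M.map C).det := by
  classical
  have hs := (linearIndepOn_id_range_iff hv.injective).mpr hv
  haveI : Fintype (hs.extend (Set.subset_univ _)) :=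
    FiniteDimensional.fintypeBasisIndex (Module.Basis.extend hs)
  have hcard : Fintype.card (hs.extend (Set.subset_univ _)) = Fintype.card n := by
    have h1 := Module.finrank_eq_card_basis (Module.Basis.extend hs)
    have h2 : Module.finrank F (n → F) = Fintype.card n := by
      simp [Module.finrank_pi]
    omega
  let σ := Fintype.equivOfCardEq hcard
  let b' := (Module.Basis.extend hs).reindex σ
  let c : Fin k → n := fun i => σ ⟨v i, hs.subset_extend _ ⟨i, rfl⟩⟩
  have hcinj : Function.Injective c := by
    intro i j hij
    have := σ.injective hij
    exact hv.injective (congrArg Subtype.val this)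
  have hb'c : ∀ i, b' (c i) = v i := by
    intro i
    simp only [b', Module.Basis.reindex_apply, Equiv.symm_apply_apply, c]
    exact Module.Basis.extend_apply_self hs _
  -- the change of basis matrix
  set P : Matrix n n F := (Pi.basisFun F n).toMatrix ⇑b' with hPdef
  have hPapp : ∀ i j, P i j = b' j i := by
    intro i j
    rw [hPdef, Module.Basis.toMatrix_apply, Pi.basisFun_repr]
  have hPunit : IsUnit P.det := by
    have := Module.Basis.toMatrix_mul_toMatrix_flip (Pi.basisFun F n) b'
    exact Matrix.isUnit_det_of_right_inverse this
  -- polynomial matrices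
  set A : Matrix n n F[X] := 1 - (X : F[X]) • M.map C with hAdef
  set P' : Matrix n n F[X] := P.map C with hP'def
  set s : Finset n := Finset.univ.image c with hsdef
  have hscard : s.card = k := by
    rw [hsdef, Finset.card_image_of_injective _ hcinj, Finset.card_univ, Fintype.card_fin]
  -- key column computation
  have hcol : ∀ (l : Fin k) (i : n), (A * P') i (c l) = (1 - C a * X) * C (P i (c l)) := by
    intro l i
    have hMP : ∀ i, (M * P) i (c l) = a * P i (c l) := by
      intro i
      have : (fun m => P m (c l)) = v l := by
        funext m; rw [hPapp, hb'c]
      calc (M * P) i (c l) = (M *ᵥ fun m => P m (c l)) i := by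
            simp [Matrix.mul_apply, Matrix.mulVec, dotProduct]
        _ = a * P i (c l) := by rw [this, hMv l]; simp [hPapp, hb'c]
    have expand : (A * P') i (c l) = C (P i (c l)) - X * C ((M * P) i (c l)) := by
      rw [hAdef, Matrix.sub_mul, Matrix.one_mul]
      have : ((X : F[X]) • M.map C * P') i (c l) = X * C ((M * P) i (c l)) := by
        rw [Matrix.smul_mul]
        simp only [Matrix.smul_apply, smul_eq_mul]
        congr 1
        rw [hP'def, ← Matrix.map_mul]
        simp [Matrix.map_apply]
      rw [Matrix.sub_apply, this, hP'def, Matrix.map_apply]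
    rw [expand, hMP, C_mul]
    ring
  -- factor out the diagonal
  set D : Matrix n n F[X] := Matrix.diagonal (fun j => if j ∈ s then (1 - C a * X) else 1)
    with hDdef
  set R : Matrix n n F[X] :=
    Matrix.of (fun i j => if j ∈ s then C (P i j) else (A * P') i j) with hRdef
  have hfact : A * P' = R * D := by
    ext i j
    rw [hDdef, Matrix.mul_diagonal, hRdef]
    by_cases hj : j ∈ s
    · simp only [Matrix.of_apply, hj, if_true]
      obtain ⟨l, _, rfl⟩ := Finset.mem_image.mp hj
      rw [hcol l i]; ring
    · simp [hj]
  have hdetD : D.det = (1 - C a * X) ^ k := by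
    rw [hDdef, Matrix.det_diagonal, ← hscard]
    rw [Finset.prod_ite_mem, Finset.univ_inter, Finset.prod_const]
  have hmain : A.det * C P.det = R.det * (1 - C a * X) ^ k := by
    have h1 : (A * P').det = A.det * P'.det := Matrix.det_mul _ _
    have h2 : P'.det = C P.det := by
      rw [hP'def, ← RingHom.mapMatrix_apply, ← RingHom.map_det]
    rw [← h2, ← h1, hfact, Matrix.det_mul, hdetD]
  have hunit : IsUnit (C P.det : F[X]) := (isUnit_C).mpr hPunit
  have : (1 - C a * X) ^ k ∣ A.det * C P.det := ⟨R.det, by rw [hmain]; ring⟩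
  exact (hunit.dvd_mul_right).mp this

lemma pow_dvd_det_one_sub_of_le (M : Matrix n n F) (a : F) (E : Submodule F (n → F))
    (hE : ∀ x ∈ E, M *ᵥ x = a • x) (k : ℕ) (hk : k ≤ Module.finrank F E) :
    (1 - C a * X) ^ k ∣ (1 - (X : F[X]) • M.map C).det := by
  classical
  let bE := Module.finBasis F E
  have li : LinearIndependent F (fun i : Fin k => ((bE (Fin.castLE hk i) : E) : n → F)) := by
    have h1 : LinearIndependent F (fun i => ((bE i : E) : n → F)) :=
      bE.linearIndependent.map' E.subtype (Submodule.ker_subtype E)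
    exact h1.comp (Fin.castLE hk) (Fin.castLE_injective hk)
  exact pow_dvd_det_one_sub M a k _ li (fun i => hE _ (bE _).2)

end Key

/-! ### The graph-theoretic eigenvectors -/

section Graph
variable (G : SimpleGraph V) [Fintype V] [DecidableEq V] [DecidableRel G.Adj]

/-- The non-backtracking matrix over ℚ. -/
def nbQ : Matrix G.Dart G.Dart ℚ :=
  Matrix.of fun d' d => if FollowsNB d' d then 1 else 0

omit [Fintype V] [DecidableEq V] [DecidableRel G.Adj] in
lemma exists_dart_edge {e : Sym2 V} (he : e ∈ G.edgeSet) : ∃ d : G.Dart, d.edge = e := by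
  induction e with
  | _ u w => exact ⟨⟨(u, w), he⟩, rfl⟩

/-- A choice of dart for each edge. -/
noncomputable def pickDart (e : G.edgeFinset) : G.Dart :=
  Classical.choose (exists_dart_edge G (SimpleGraph.mem_edgeFinset.mp e.2))

lemma pickDart_edge (e : G.edgeFinset) : (pickDart G e).edge = e.val :=
  Classical.choose_spec (exists_dart_edge G (SimpleGraph.mem_edgeFinset.mp e.2))

/-- The auxiliary linear map whose kernel consists of eigenvectors. -/
noncomputable def Lmap (a : ℚ) {W : Type*} (π : W → V) :
    (G.Dart → ℚ) →ₗ[ℚ] (G.edgeFinset → ℚ) × (W → ℚ) where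
  toFun x := ⟨fun e => x (pickDart G e).symm + a * x (pickDart G e),
              fun w => ∑ d ∈ Finset.univ.filter (fun d : G.Dart => d.snd = π w), x d⟩
  map_add' x y := by
    refine Prod.ext ?_ ?_ <;> funext i <;>
      simp [Finset.sum_add_distrib] <;> ring
  map_smul' c x := by
    refine Prod.ext ?_ ?_ <;> funext i <;>
      simp [Finset.mul_sum] <;> ring

variable {G}

lemma mulVec_nbQ (x : G.Dart → ℚ) (d' : G.Dart) :
    (nbQ G *ᵥ x) d' =
      (∑ d ∈ Finset.univ.filter (fun d : G.Dart => d.snd = d'.fst), x d) - x d'.symm := by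
  have hfilter : Finset.univ.filter (fun d : G.Dart => FollowsNB d' d)
      = (Finset.univ.filter (fun d : G.Dart => d.snd = d'.fst)).erase d'.symm := by
    ext d
    simp only [Finset.mem_filter, Finset.mem_erase, Finset.mem_univ, true_and]
    unfold FollowsNB
    constructor
    · rintro ⟨h1, h2⟩
      refine ⟨fun hd => h2 ?_, h1.symm⟩
      rw [hd, SimpleGraph.Dart.symm_symm]
    · rintro ⟨h1, h2⟩
      refine ⟨h2.symm, fun hd => h1 ?_⟩
      rw [hd, SimpleGraph.Dart.symm_symm]
  have hmem : d'.symm ∈ Finset.univ.filter (fun d : G.Dart => d.snd = d'.fst) := by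
    simp [SimpleGraph.Dart.symm]
  calc (nbQ G *ᵥ x) d' = ∑ d : G.Dart, (if FollowsNB d' d then 1 else 0) * x d := rfl
    _ = ∑ d ∈ Finset.univ.filter (fun d : G.Dart => FollowsNB d' d), x d := by
        rw [Finset.sum_filter]
        exact Finset.sum_congr rfl fun d _ => by split <;> simp
    _ = _ := by rw [hfilter, Finset.sum_erase_eq_sub hmem]

lemma mulVec_nbQ_eigen (a : ℚ) (x : G.Dart → ℚ)
    (hsym : ∀ d : G.Dart, x d.symm = -a * x d)
    (hsum : ∀ v : V, ∑ d ∈ Finset.univ.filter (fun d : G.Dart => d.snd = v), x d = 0) :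
    nbQ G *ᵥ x = a • x := by
  funext d'
  rw [mulVec_nbQ, hsum, hsym]
  simp only [Pi.smul_apply, smul_eq_mul]
  ring

lemma ker_symm (a : ℚ) (ha : a * a = 1) {W : Type*} (π : W → V) (x : G.Dart → ℚ)
    (hx : x ∈ LinearMap.ker (Lmap G a π)) (d : G.Dart) : x d.symm = -a * x d := by
  have h0 : ∀ e : G.edgeFinset, x (pickDart G e).symm + a * x (pickDart G e) = 0 := by
    intro e
    have := congrArg Prod.fst (LinearMap.mem_ker.mp hx)
    exact congrFun this e
  set e : G.edgeFinset := ⟨d.edge, SimpleGraph.mem_edgeFinset.mpr d.edge_mem⟩ with he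
  have hedge : (pickDart G e).edge = d.edge := pickDart_edge G e
  rcases (SimpleGraph.dart_edge_eq_iff _ _).mp hedge with h | h
  · have := h0 e; rw [h] at this; linarith
  · have := h0 e; rw [h, SimpleGraph.Dart.symm_symm] at this
    linear_combination a * this - x d.symm * ha

lemma ker_sum {a : ℚ} {W : Type*} {π : W → V} {x : G.Dart → ℚ}
    (hx : x ∈ LinearMap.ker (Lmap G a π)) (w : W) :
    ∑ d ∈ Finset.univ.filter (fun d : G.Dart => d.snd = π w), x d = 0 := by
  have := congrArg Prod.snd (LinearMap.mem_ker.mp hx)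
  exact congrFun this w

lemma finrank_ker_Lmap (a : ℚ) {W : Type*} [Fintype W] [DecidableEq W] (π : W → V) :
    2 * G.edgeFinset.card
      ≤ Module.finrank ℚ (LinearMap.ker (Lmap G a π))
          + (G.edgeFinset.card + Fintype.card W) := by
  have h := LinearMap.finrank_range_add_finrank_ker (Lmap G a π)
  have h2 : Module.finrank ℚ (LinearMap.range (Lmap G a π))
      ≤ Module.finrank ℚ ((G.edgeFinset → ℚ) × (W → ℚ)) := Submodule.finrank_le _
  have h3 : Module.finrank ℚ ((G.edgeFinset → ℚ) × (W → ℚ))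
      = G.edgeFinset.card + Fintype.card W := by
    rw [Module.finrank_prod, Module.finrank_pi, Module.finrank_pi, Fintype.card_coe]
  have h4 : Module.finrank ℚ (G.Dart → ℚ) = 2 * G.edgeFinset.card := by
    rw [Module.finrank_pi, SimpleGraph.dart_card_eq_twice_card_edges]
  omega

lemma sum_at_base (v₀ : V) (x : G.Dart → ℚ)
    (hsym : ∀ d : G.Dart, x d.symm = -1 * x d)
    (hsum : ∀ v : V, v ≠ v₀ →
      ∑ d ∈ Finset.univ.filter (fun d : G.Dart => d.snd = v), x d = 0) :
    ∀ v : V, ∑ d ∈ Finset.univ.filter (fun d : G.Dart => d.snd = v), x d = 0 := by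
  have htot : ∑ v : V, ∑ d ∈ Finset.univ.filter (fun d : G.Dart => d.snd = v), x d
      = ∑ d : G.Dart, x d := Finset.sum_fiberwise _ _ _
  have hzero : ∑ d : G.Dart, x d = 0 := by
    have h := Equiv.sum_comp (Function.Involutive.toPerm _ SimpleGraph.Dart.symm_involutive) x
    have h2 : ∑ d : G.Dart, x d.symm = ∑ d : G.Dart, x d := h
    rw [Finset.sum_congr rfl (fun d _ => hsym d)] at h2
    simp only [neg_one_mul, Finset.sum_neg_distrib] at h2
    linarith
  have herase : ∑ v ∈ Finset.univ.erase v₀,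
      (∑ d ∈ Finset.univ.filter (fun d : G.Dart => d.snd = v), x d) = 0 :=
    Finset.sum_eq_zero fun v hv => hsum v (Finset.ne_of_mem_erase hv)
  have h0 : ∑ d ∈ Finset.univ.filter (fun d : G.Dart => d.snd = v₀), x d = 0 := by
    have := Finset.add_sum_erase Finset.univ
      (fun v => ∑ d ∈ Finset.univ.filter (fun d : G.Dart => d.snd = v), x d)
      (Finset.mem_univ v₀)
    rw [herase, htot, hzero] at this
    linarith
  intro v
  by_cases hv : v = v₀
  · rw [hv]; exact h0
  · exact hsum v hv

end Graph

/-! ### Main theorem -/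

theorem L_function_zeros (G : SimpleGraph V) [Fintype V] [DecidableEq V]
    [DecidableRel G.Adj] (hconn : G.Connected)
    (hE : Fintype.card V ≤ G.edgeFinset.card) :
    (1 - Polynomial.X : Polynomial ℤ) ^ (G.edgeFinset.card - Fintype.card V + 1) *
        (1 + Polynomial.X) ^ (G.edgeFinset.card - Fintype.card V) ∣
      Matrix.det (1 - nbPolyMatrix G) := by
  classical
  obtain ⟨v₀⟩ := hconn.nonempty
  set g' := G.edgeFinset.card - Fintype.card V with hg'
  set q : ℚ[X] := (1 - (X : ℚ[X]) • (nbQ G).map C).det with hq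
  have hVpos : 1 ≤ Fintype.card V := Fintype.card_pos_iff.mpr ⟨v₀⟩
  -- factor (1 - X)^(g'+1) over ℚ
  have h1 : (1 - (X : ℚ[X])) ^ (g' + 1) ∣ q := by
    have hk : g' + 1 ≤ Module.finrank ℚ
        (LinearMap.ker (Lmap G 1 (Subtype.val : {w : V // w ≠ v₀} → V))) := by
      have hfr := finrank_ker_Lmap (G := G) 1 (Subtype.val : {w : V // w ≠ v₀} → V)
      have hcW : Fintype.card {w : V // w ≠ v₀} = Fintype.card V - 1 := by
        have := Fintype.card_subtype_compl (fun w : V => w = v₀)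
        rw [Fintype.card_subtype_eq] at this
        exact this
      rw [hcW] at hfr
      omega
    have hEig : ∀ x ∈ LinearMap.ker (Lmap G 1 (Subtype.val : {w : V // w ≠ v₀} → V)),
        nbQ G *ᵥ x = (1 : ℚ) • x := by
      intro x hx
      have hsym : ∀ d : G.Dart, x d.symm = -1 * x d :=
        fun d => ker_symm 1 (by norm_num) _ x hx d
      refine mulVec_nbQ_eigen 1 x hsym ?_
      exact sum_at_base v₀ x hsym (fun v hv => ker_sum hx ⟨v, hv⟩)
    have := pow_dvd_det_one_sub_of_le (nbQ G) 1 _ hEig (g' + 1) hk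
    simpa using this
  -- factor (1 + X)^g' over ℚ
  have h2 : (1 + (X : ℚ[X])) ^ g' ∣ q := by
    have hk : g' ≤ Module.finrank ℚ (LinearMap.ker (Lmap G (-1) (id : V → V))) := by
      have hfr := finrank_ker_Lmap (G := G) (-1) (id : V → V)
      omega
    have hEig : ∀ x ∈ LinearMap.ker (Lmap G (-1) (id : V → V)),
        nbQ G *ᵥ x = (-1 : ℚ) • x := by
      intro x hx
      have hsym : ∀ d : G.Dart, x d.symm = -(-1) * x d :=
        fun d => ker_symm (-1) (by norm_num) _ x hx d
      exact mulVec_nbQ_eigen (-1) x hsym (fun v => ker_sum hx v)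
    have := pow_dvd_det_one_sub_of_le (nbQ G) (-1) _ hEig g' hk
    have hrw : (1 - C (-1 : ℚ) * X) = 1 + X := by
      rw [map_neg, Polynomial.C_1]; ring
    rwa [hrw] at this
  -- combine over ℚ
  have hcop : IsCoprime (1 - (X : ℚ[X])) (1 + X) := by
    refine ⟨C (2⁻¹ : ℚ), C (2⁻¹ : ℚ), ?_⟩
    have h2' : (C (2⁻¹ : ℚ) + C (2⁻¹ : ℚ)) = 1 := by rw [← C_add]; norm_num
    linear_combination h2'
  have h12 : (1 - (X : ℚ[X])) ^ (g' + 1) * (1 + X) ^ g' ∣ q := (hcop.pow).mul_dvd h1 h2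
  -- the integral monic divisor
  set D : ℤ[X] := (X - C 1) ^ (g' + 1) * (X + C 1) ^ g' with hD
  have hDmonic : D.Monic := ((monic_X_sub_C 1).pow _).mul ((monic_X_add_C 1).pow _)
  -- relate p over ℤ and q over ℚ
  have hmapp : (Matrix.det (1 - nbPolyMatrix G)).map (Int.castRingHom ℚ) = q := by
    have hdet := RingHom.map_det (Polynomial.mapRingHom (Int.castRingHom ℚ))
      (1 - nbPolyMatrix G)
    rw [hq]
    have hmat : (Polynomial.mapRingHom (Int.castRingHom ℚ)).mapMatrix (1 - nbPolyMatrix G)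
        = 1 - (X : ℚ[X]) • (nbQ G).map C := by
      refine Matrix.ext fun d' d => ?_
      rw [RingHom.mapMatrix_apply, Matrix.map_apply]
      by_cases h1' : d' = d <;> by_cases h2' : FollowsNB d' d <;> subst_vars <;>
        simp_all [nbPolyMatrix, nbQ, Matrix.one_apply, Matrix.sub_apply, Matrix.smul_apply,
          Matrix.map_apply, Polynomial.map_sub, Polynomial.map_one, Polynomial.map_X]
    rw [← hmat, ← hdet]
    rfl
  have hDq : D.map (Int.castRingHom ℚ) ∣ (Matrix.det (1 - nbPolyMatrix G)).map
      (Int.castRingHom ℚ) := by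
    rw [hmapp]
    have hrw : D.map (Int.castRingHom ℚ)
        = (-1 : ℚ[X]) ^ (g' + 1) * ((1 - X) ^ (g' + 1) * (1 + X) ^ g') := by
      rw [hD]
      simp only [Polynomial.map_mul, Polynomial.map_pow, Polynomial.map_sub,
        Polynomial.map_add, Polynomial.map_X, Polynomial.map_one, Polynomial.map_C,
        _root_.map_one, Polynomial.C_1]
      rw [show ((X : ℚ[X]) - 1) = -(1 - X) by ring, neg_pow]
      ring
    rw [hrw]
    exact ((isUnit_one.neg).pow (g' + 1)).mul_left_dvd.mpr h12
  have hDp : D ∣ Matrix.det (1 - nbPolyMatrix G) :=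
    (map_dvd_map _ Int.cast_injective hDmonic).mp hDq
  -- convert to the required form
  obtain ⟨r, hr⟩ := hDp
  refine ⟨(-1) ^ (g' + 1) * r, ?_⟩
  have hunit : ((-1 : ℤ[X]) ^ (g' + 1)) * ((-1 : ℤ[X]) ^ (g' + 1)) = 1 := by
    rw [← mul_pow]; norm_num
  have hsub : (1 - (X : ℤ[X])) ^ (g' + 1) = (-1) ^ (g' + 1) * (X - C 1) ^ (g' + 1) := by
    rw [show (1 - (X : ℤ[X])) = -(X - C 1) by simp, neg_pow]
  calc Matrix.det (1 - nbPolyMatrix G) = D * r := hr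
    _ = ((-1 : ℤ[X]) ^ (g' + 1) * ((-1 : ℤ[X]) ^ (g' + 1)))
        * ((X - C 1) ^ (g' + 1) * (X + C 1) ^ g' * r) := by rw [hunit]; ring
    _ = (1 - X) ^ (g' + 1) * (1 + X) ^ g' * ((-1) ^ (g' + 1) * r) := by
        rw [hsub]
        have : (X + C 1 : ℤ[X]) = 1 + X := by simp [add_comm]
        rw [this]
        ring
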